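/- arXiv:2506.12857 — 3 statements merged into one kernel-verified Lean document; each statement's English description precedes it below -/
import Mathlib

section
/- For integers m ≥ 2 and n ≥ 0, the sum over all m-tuples (n_1,...,n_m) of nonnegative integers with Σ n_i = n of the value n_1² equals binomial(m+n-1, m+1) + binomial(m+n, m+1). -/
open Finset

private lemma adT_succ (k n : ℕ) :
    Finset.Nat.antidiagonalTuple (k + 1) n =
      (Finset.HasAntidiagonal.antidiagonal n).biUnion (fun p =>
        (Finset.Nat.antidiagonalTuple k p.2).map
          ⟨Fin.cons p.1, Fin.cons_right_injective _⟩) := by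
  ext f
  simp only [Finset.Nat.mem_antidiagonalTuple, mem_biUnion, Finset.HasAntidiagonal.mem_antidiagonal,
    mem_map, Function.Embedding.coeFn_mk, Prod.exists]
  constructor
  · intro hf
    refine ⟨f 0, ∑ i, Fin.tail f i, ?_, Fin.tail f, rfl, Fin.cons_self_tail f⟩
    rw [← hf, Fin.sum_univ_succ]
    rfl
  · rintro ⟨a, b, hab, g, hg, rfl⟩
    rw [Fin.sum_univ_succ]
    simpa [hg] using hab

private lemma sum_adT (k n : ℕ) (g : ℕ → ℕ) :
    ∑ f ∈ Finset.Nat.antidiagonalTuple (k + 1) n, g (f 0) =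
      ∑ p ∈ Finset.HasAntidiagonal.antidiagonal n, g p.1 * (Finset.Nat.antidiagonalTuple k p.2).card := by
  rw [adT_succ, Finset.sum_biUnion]
  · refine Finset.sum_congr rfl fun p hp => ?_
    rw [Finset.sum_map]
    simp [Fin.cons_zero, mul_comm]
  · intro p hp q hq hpq
    simp only [Function.onFun]
    rw [Finset.disjoint_left]
    intro f hf1 hf2
    simp only [mem_map, Function.Embedding.coeFn_mk] at hf1 hf2
    obtain ⟨g1, hg1, rfl⟩ := hf1
    obtain ⟨g2, hg2, heq⟩ := hf2
    apply hpq
    have h0 : q.1 = p.1 := by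
      have := congr_fun heq 0
      simpa using this
    have hp' := Finset.HasAntidiagonal.mem_antidiagonal.mp (Finset.mem_coe.mp hp)
    have hq' := Finset.HasAntidiagonal.mem_antidiagonal.mp (Finset.mem_coe.mp hq)
    ext <;> omega

private lemma card_adT (k n : ℕ) :
    (Finset.Nat.antidiagonalTuple (k + 1) n).card = (n + k).choose k := by
  induction k generalizing n with
  | zero => simp [Finset.Nat.antidiagonalTuple_one]
  | succ k ih =>
    have h := sum_adT (k + 1) n (fun _ => 1)
    simp only [one_mul] at h
    rw [Finset.card_eq_sum_ones, h, Finset.Nat.sum_antidiagonal_eq_sum_range_succ_mk]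
    simp only [ih]
    have hr := Finset.sum_range_reflect (fun i => (i + k).choose k) (n + 1)
    calc ∑ i ∈ range (n + 1), (n - i + k).choose k
        = ∑ i ∈ range (n + 1), (n + 1 - 1 - i + k).choose k := by
          refine Finset.sum_congr rfl fun i hi => by rw [Nat.add_sub_cancel]
      _ = ∑ i ∈ range (n + 1), (i + k).choose k := hr
      _ = (n + k + 1).choose (k + 1) := Nat.sum_range_add_choose n k
      _ = (n + (k + 1)).choose (k + 1) := by rw [Nat.add_assoc]

private lemma choose_sq (m : ℕ) :
    (m + 2).choose 2 + (m + 1).choose 2 = (m + 1) ^ 2 := by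
  induction m with
  | zero => decide
  | succ m ih =>
    show (m + 3).choose 2 + (m + 2).choose 2 = (m + 2) ^ 2
    have h1 : (m + 3).choose 2 = (m + 2).choose 1 + (m + 2).choose 2 :=
      Nat.choose_succ_succ _ _
    have h2 : (m + 2).choose 2 = (m + 1).choose 1 + (m + 1).choose 2 :=
      Nat.choose_succ_succ _ _
    simp only [Nat.choose_one_right] at h1 h2
    have e : (m + 2) ^ 2 = (m + 1) ^ 2 + (2 * m + 3) := by ring
    omega

private lemma sq_sum (n : ℕ) :
    ∑ i ∈ range (n + 1), i ^ 2 = (n + 1).choose 3 + (n + 2).choose 3 := by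
  induction n with
  | zero => decide
  | succ n ih =>
    rw [Finset.sum_range_succ, ih]
    show (n + 1).choose 3 + (n + 2).choose 3 + (n + 1) ^ 2
      = (n + 2).choose 3 + (n + 3).choose 3
    have h1 : (n + 3).choose 3 = (n + 2).choose 2 + (n + 2).choose 3 :=
      Nat.choose_succ_succ _ _
    have h2 : (n + 2).choose 3 = (n + 1).choose 2 + (n + 1).choose 3 :=
      Nat.choose_succ_succ _ _
    have h3 := choose_sq n
    omega

private lemma key (k : ℕ) : ∀ n : ℕ,
    ∑ i ∈ range (n + 1), i ^ 2 * (n - i + k).choose k =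
      (n + k + 1).choose (k + 3) + (n + k + 2).choose (k + 3) := by
  induction k with
  | zero =>
    intro n
    simpa using sq_sum n
  | succ k ih =>
    intro n
    induction n with
    | zero =>
      simp [Nat.choose_eq_zero_of_lt]
    | succ n ihn =>
      have step : ∀ i ∈ range (n + 2),
          i ^ 2 * (n + 1 - i + (k + 1)).choose (k + 1)
            = i ^ 2 * (n + 1 - i + k).choose (k + 1)
              + i ^ 2 * (n + 1 - i + k).choose k := by
        intro i hi
        rw [show n + 1 - i + (k + 1) = (n + 1 - i + k) + 1 from by omega,
          Nat.choose_succ_succ, mul_add]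
        ring
      rw [Finset.sum_congr rfl step, Finset.sum_add_distrib]
      have hA : ∑ i ∈ range (n + 2), i ^ 2 * (n + 1 - i + k).choose (k + 1)
          = ∑ i ∈ range (n + 1), i ^ 2 * (n - i + (k + 1)).choose (k + 1) := by
        rw [Finset.sum_range_succ, show n + 1 - (n + 1) + k = k from by omega,
          Nat.choose_succ_self, mul_zero, add_zero]
        refine Finset.sum_congr rfl fun i hi => ?_
        have : i ≤ n := by simpa [Nat.lt_succ_iff] using hi
        rw [show n + 1 - i + k = n - i + (k + 1) from by omega]
      have hB : ∑ i ∈ range (n + 2), i ^ 2 * (n + 1 - i + k).choose k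
          = (n + 1 + k + 1).choose (k + 3) + (n + 1 + k + 2).choose (k + 3) := ih (n + 1)
      rw [hA, hB, ihn]
      have p1 : (n + (k + 1) + 2).choose (k + 1 + 3)
          = (n + (k + 1) + 1).choose (k + 3) + (n + (k + 1) + 1).choose (k + 1 + 3) :=
        Nat.choose_succ_succ _ _
      have p2 : (n + (k + 1) + 3).choose (k + 1 + 3)
          = (n + (k + 1) + 2).choose (k + 3) + (n + (k + 1) + 2).choose (k + 1 + 3) :=
        Nat.choose_succ_succ _ _
      have q1 : n + 1 + (k + 1) + 1 = n + (k + 1) + 2 := by omega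
      have q2 : n + 1 + (k + 1) + 2 = n + (k + 1) + 3 := by omega
      have q3 : n + 1 + k + 1 = n + (k + 1) + 1 := by omega
      have q4 : n + 1 + k + 2 = n + (k + 1) + 2 := by omega
      rw [q1, q2, q3, q4, p1, p2]
      omega

/-- The sum of `n_1²` over all `m`-tuples of nonnegative integers summing to `n`
equals `binomial (m+n-1) (m+1) + binomial (m+n) (m+1)`. -/
theorem stmt4 (m n : ℕ) (hm : 2 ≤ m) :
    ∑ f ∈ Finset.Nat.antidiagonalTuple m n, (f ⟨0, by omega⟩) ^ 2 =
      (m + n - 1).choose (m + 1) + (m + n).choose (m + 1) := by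
  obtain ⟨k, rfl⟩ : ∃ k, m = k + 2 := ⟨m - 2, by omega⟩
  have e1 : k + 2 + n - 1 = n + k + 1 := by omega
  have e2 : k + 2 + n = n + k + 2 := by omega
  rw [e1, e2]
  have h0 : (⟨0, by omega⟩ : Fin (k + 2)) = 0 := rfl
  simp only [h0]
  have hs : ∑ f ∈ Finset.Nat.antidiagonalTuple (k + 2) n, (f 0) ^ 2
      = ∑ p ∈ Finset.HasAntidiagonal.antidiagonal n, p.1 ^ 2 * (Finset.Nat.antidiagonalTuple (k + 1) p.2).card :=
    sum_adT (k + 1) n (fun x => x ^ 2)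
  rw [hs]
  simp only [card_adT]
  rw [Finset.Nat.sum_antidiagonal_eq_sum_range_succ_mk]
  exact key k n
end

section
/- Let m, n be positive integers, M = binomial(m+n-1, n). Define I_o(ρ) = Σ_{i=1}^{m²} tr(ρ O'_i)² and I_{t'}(ρ) = Σ_{i=1}^{m²-1} tr(ρ H_i)² where {H_i} are the normalized traceless tangent basis elements O_i/√binomial(m+n, m+1). Then for any n-photon density matrix ρ: I_{t'}(ρ) = (I_o(ρ) - n²/m)/binomial(m+n, m+1), and I_t(ρ) := I_{t'}(ρ) + 1/M = I_o(ρ)/binomial(m+n, m+1) - (n-1)/binomial(m+n, m). -/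
open Matrix
open scoped ComplexOrder

/-- The `n`-photon `m`-mode Fock basis: tuples of occupation numbers summing to `n`. -/
abbrev FockT (m n : ℕ) := {f : Fin m → ℕ // ∑ i, f i = n}

instance (m n : ℕ) : Fintype (FockT m n) :=
  Fintype.subtype (Finset.Nat.antidiagonalTuple m n) fun _ =>
    Finset.Nat.mem_antidiagonalTuple

/-- Matrix element `⟨B| a_k† a_l |A⟩` on Fock states. -/
noncomputable def ampl {m : ℕ} (A B : Fin m → ℕ) (k l : Fin m) : ℝ :=
  if 1 ≤ A l ∧ B = Function.update (Function.update A l (A l - 1)) k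
      ((Function.update A l (A l - 1)) k + 1)
  then Real.sqrt (A l) * Real.sqrt ((Function.update A l (A l - 1)) k + 1) else 0

/-- The Jordan–Schwinger image `Σ_{k,l} h_{kl} a_k† a_l` on the `n`-photon sector. -/
noncomputable def JS {m : ℕ} (n : ℕ) (h : Matrix (Fin m) (Fin m) ℂ) :
    Matrix (FockT m n) (FockT m n) ℂ :=
  Matrix.of fun B A => ∑ k, ∑ l, h k l * (ampl A.1 B.1 k l : ℝ)

/-- Generator of `(a_j† a_k + a_k† a_j)/√2`. -/
noncomputable def symGen {m : ℕ} (j k : Fin m) : Matrix (Fin m) (Fin m) ℂ :=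
  ((Real.sqrt 2)⁻¹ : ℂ) • (Matrix.single j k 1 + Matrix.single k j 1)

/-- Generator of `i(a_j† a_k - a_k† a_j)/√2`. -/
noncomputable def asymGen {m : ℕ} (j k : Fin m) : Matrix (Fin m) (Fin m) ℂ :=
  (Complex.I * ((Real.sqrt 2)⁻¹ : ℂ)) • (Matrix.single j k 1 - Matrix.single k j 1)

/-- Generator of `(Σ_{j=1}^{l+1} n̂_j - (l+1) n̂_{l+2})/√((l+1)(l+2))` (0-based `l`). -/
noncomputable def diagGen {m : ℕ} (l : Fin (m - 1)) : Matrix (Fin m) (Fin m) ℂ :=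
  ((Real.sqrt ((l.1 + 1) * (l.1 + 2)))⁻¹ : ℂ) •
    Matrix.diagonal (fun i : Fin m => if (i : ℕ) < l.1 + 1 then 1
      else if (i : ℕ) = l.1 + 1 then -((l.1 + 1 : ℕ) : ℂ) else 0)

/-- The observable invariant `I_o(ρ) = Σ_{i=1}^{m²} tr(ρ O'_i)²` from the observables
`n̂_j`, `(a_j†a_k + a_k†a_j)/√2`, `i(a_j†a_k - a_k†a_j)/√2`. -/
noncomputable def Io (m n : ℕ) (ρ : Matrix (FockT m n) (FockT m n) ℂ) : ℝ :=
  (∑ j : Fin m, (((ρ * JS n (Matrix.single j j 1)).trace).re) ^ 2) +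
  (∑ p : {p : Fin m × Fin m // p.1 < p.2},
    (((ρ * JS n (symGen p.1.1 p.1.2)).trace).re) ^ 2) +
  (∑ p : {p : Fin m × Fin m // p.1 < p.2},
    (((ρ * JS n (asymGen p.1.1 p.1.2)).trace).re) ^ 2)

/-- The traceless tangent invariant `I_{t'}(ρ) = Σ_{i=1}^{m²-1} tr(ρ H_i)²`, where
`H_i = O_i / √(binom (m+n) (m+1))` are the normalized traceless tangent observables. -/
noncomputable def Itp (m n : ℕ) (ρ : Matrix (FockT m n) (FockT m n) ℂ) : ℝ :=
  (∑ l : Fin (m - 1),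
    (((ρ * ((((Real.sqrt ((m + n).choose (m + 1)))⁻¹ : ℝ) : ℂ) •
      JS n (diagGen l))).trace).re) ^ 2) +
  (∑ p : {p : Fin m × Fin m // p.1 < p.2},
    (((ρ * ((((Real.sqrt ((m + n).choose (m + 1)))⁻¹ : ℝ) : ℂ) •
      JS n (symGen p.1.1 p.1.2))).trace).re) ^ 2) +
  (∑ p : {p : Fin m × Fin m // p.1 < p.2},
    (((ρ * ((((Real.sqrt ((m + n).choose (m + 1)))⁻¹ : ℝ) : ℂ) •
      JS n (asymGen p.1.1 p.1.2))).trace).re) ^ 2)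

/- ---------------- Auxiliary lemmas ---------------- -/

lemma ampl_diag' {m : ℕ} (A B : Fin m → ℕ) (j : Fin m) :
    ampl A B j j = if B = A then (A j : ℝ) else 0 := by
  unfold ampl
  rcases Nat.eq_zero_or_pos (A j) with h0 | h1
  · simp [h0]
  · have h4 : 1 ≤ A j := h1
    have h2 : A j - 1 + 1 = A j := Nat.succ_pred_eq_of_pos h1
    have h3 : ((A j - 1 : ℕ) : ℝ) + 1 = (A j : ℝ) := by
      rw [Nat.cast_sub h1]; ring
    simp only [Function.update_self, Function.update_idem, h2, Function.update_eq_self, h4,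
      true_and, h3]
    split_ifs with h
    · exact Real.mul_self_sqrt (Nat.cast_nonneg _)
    · rfl

lemma JS_E' {m : ℕ} (n : ℕ) (j : Fin m) :
    JS n (Matrix.single j j 1) = Matrix.diagonal (fun A : FockT m n => (A.1 j : ℂ)) := by
  ext B A
  simp only [JS, Matrix.of_apply, Matrix.single, ite_mul, one_mul, zero_mul,
    Matrix.diagonal_apply]
  rw [Finset.sum_eq_single j]
  · rw [Finset.sum_eq_single j]
    · rw [ampl_diag']
      by_cases h : B = A
      · subst h; simp
      · have h' : ¬(B.1 = A.1) := fun hc => h (Subtype.ext hc)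
        simp [h, h']
    · intro l _ hl; simp [hl.symm]
    · simp
  · intro k _ hk
    apply Finset.sum_eq_zero; intro l _; simp [hk.symm]
  · simp

lemma JS_diagonal' {m : ℕ} (n : ℕ) (d : Fin m → ℂ) :
    JS n (Matrix.diagonal d) =
      Matrix.diagonal (fun A : FockT m n => ∑ k, d k * (A.1 k : ℂ)) := by
  ext B A
  simp only [JS, Matrix.of_apply, Matrix.diagonal_apply]
  rw [Finset.sum_congr rfl (fun k _ => Finset.sum_eq_single k
    (fun l _ hl => by simp [Ne.symm hl]) (by simp))]
  by_cases h : B = A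
  · subst h
    simp [ampl_diag', Matrix.diagonal_apply_eq]
  · have h' : ¬(B.1 = A.1) := fun hc => h (Subtype.ext hc)
    simp [h, h', ampl_diag']

lemma js_smul' {m : ℕ} (n : ℕ) (c : ℂ) (h : Matrix (Fin m) (Fin m) ℂ) :
    JS n (c • h) = c • JS n h := by
  ext B A
  simp [JS, Finset.mul_sum, mul_assoc]

lemma trace_mul_diagonal' {ι : Type*} [Fintype ι] [DecidableEq ι]
    (ρ : Matrix ι ι ℂ) (d : ι → ℂ) :
    (ρ * Matrix.diagonal d).trace = ∑ A, ρ A A * d A := by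
  simp [Matrix.trace, Matrix.diag, Matrix.mul_diagonal]

lemma trace_smul_re' {ι : Type*} [Fintype ι] (c : ℝ) (ρ X : Matrix ι ι ℂ) :
    ((ρ * (((c : ℝ) : ℂ) • X)).trace).re = c * ((ρ * X).trace).re := by
  rw [Matrix.mul_smul, Matrix.trace_smul]
  simp

lemma gellmann_diag' (F : ℕ → ℝ) :
    ∀ m : ℕ, 1 ≤ m →
    ∑ l ∈ Finset.range (m - 1),
      ((∑ j ∈ Finset.range (l + 1), F j) - (l + 1) * F (l + 1)) ^ 2 /
        ((l + 1) * (l + 2))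
    = ∑ j ∈ Finset.range m, F j ^ 2 - (∑ j ∈ Finset.range m, F j) ^ 2 / m := by
  intro m
  induction m with
  | zero => omega
  | succ k ih =>
    intro _
    rcases Nat.eq_zero_or_pos k with hk | hk
    · subst hk; simp
    · have hK : (k : ℝ) ≥ 1 := by exact_mod_cast hk
      have hsucc : k + 1 - 1 = k := by omega
      have hk1 : k - 1 + 1 = k := by omega
      rw [hsucc, ← hk1, Finset.sum_range_succ, hk1, ih hk]
      rw [Finset.sum_range_succ F, Finset.sum_range_succ (fun j => F j ^ 2)]
      have e1 : ((k - 1 : ℕ) : ℝ) + 1 = (k : ℝ) := by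
        rw [Nat.cast_sub hk]; ring
      have e2 : ((k - 1 : ℕ) : ℝ) + 2 = (k : ℝ) + 1 := by
        rw [Nat.cast_sub hk]; ring
      rw [e1, e2]
      push_cast
      set S := ∑ j ∈ Finset.range k, F j
      have hk0 : (k : ℝ) ≠ 0 := by linarith
      have hk10 : (k : ℝ) + 1 ≠ 0 := by linarith
      field_simp
      ring

lemma final_arith (m n C D M Io : ℝ) (hm : 1 ≤ m) (hn : 1 ≤ n)
    (hC : 0 < C) (hD : 0 < D) (hM : 0 < M)
    (h1 : C * (m + 1) = D * n) (h2 : D * m = M * (m + n)) :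
    (Io - n ^ 2 / m) / C + 1 / M = Io / C - (n - 1) / D := by
  have hm0 : m ≠ 0 := by linarith
  field_simp
  linear_combination (M * n) * h1 + C * h2

/-- `I_{t'} = (I_o - n²/m)/binom(m+n, m+1)` and
`I_t = I_{t'} + 1/M = I_o/binom(m+n, m+1) - (n-1)/binom(m+n, m)`. -/
theorem stmt15 (m n : ℕ) (hm : 0 < m) (hn : 0 < n)
    (ρ : Matrix (FockT m n) (FockT m n) ℂ)
    (hρ : ρ.PosSemidef) (htr : ρ.trace = 1) :
    Itp m n ρ = (Io m n ρ - (n : ℝ) ^ 2 / m) / ((m + n).choose (m + 1)) ∧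
    Itp m n ρ + 1 / (((m + n - 1).choose n : ℕ) : ℝ) =
      Io m n ρ / ((m + n).choose (m + 1)) - ((n : ℝ) - 1) / ((m + n).choose m) := by
  classical
  set f : Fin m → ℝ := fun j => ((ρ * JS n (Matrix.single j j 1)).trace).re with hfdef
  set F : ℕ → ℝ := fun j => if h : j < m then f ⟨j, h⟩ else 0 with hFdef
  have hCpos : (0 : ℝ) < ((m + n).choose (m + 1) : ℝ) := by
    have : 0 < (m + n).choose (m + 1) := Nat.choose_pos (by omega)
    exact_mod_cast this
  have hc2 : ((Real.sqrt ((m + n).choose (m + 1)))⁻¹) ^ 2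
      = (((m + n).choose (m + 1) : ℝ))⁻¹ := by
    rw [inv_pow, Real.sq_sqrt (Nat.cast_nonneg _)]
  have ht : ∀ j : Fin m, (ρ * JS n (Matrix.single j j 1)).trace
      = ∑ A : FockT m n, ρ A A * (A.1 j : ℂ) := by
    intro j; rw [JS_E', trace_mul_diagonal']
  -- sum of means of number operators is n
  have hsum : ∑ j, f j = n := by
    have key : ∑ j : Fin m, (ρ * JS n (Matrix.single j j 1)).trace = (n : ℂ) := by
      simp only [ht]
      rw [Finset.sum_comm]
      have h1 : ∀ A : FockT m n, ∑ j : Fin m, ρ A A * (A.1 j : ℂ) = ρ A A * n := by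
        intro A
        rw [← Finset.mul_sum]
        congr 1
        exact_mod_cast congrArg (Nat.cast : ℕ → ℂ) A.2
      rw [Finset.sum_congr rfl (fun A _ => h1 A), ← Finset.sum_mul]
      have h2 : ∑ A : FockT m n, ρ A A = ρ.trace := rfl
      rw [h2, htr, one_mul]
    calc ∑ j, f j = (∑ j : Fin m, (ρ * JS n (Matrix.single j j 1)).trace).re := by
            simp [hfdef, Complex.re_sum]
      _ = n := by rw [key]; simp
  -- trace formula for the diagonal traceless generators
  have hdiag : ∀ l : Fin (m - 1), ((ρ * JS n (diagGen l)).trace).re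
      = (Real.sqrt ((l.1 + 1) * (l.1 + 2)))⁻¹ *
        ((∑ j ∈ Finset.range (l.1 + 1), F j) - (l.1 + 1) * F (l.1 + 1)) := by
    intro l
    have hl : l.1 + 1 < m := by omega
    set r : ℕ → ℝ := fun k => if k < l.1 + 1 then 1
      else if k = l.1 + 1 then -((l.1 + 1 : ℕ) : ℝ) else 0 with hrdef
    rw [diagGen, js_smul', JS_diagonal', ← Complex.ofReal_inv, trace_smul_re',
      trace_mul_diagonal']
    congr 1
    have swap : (∑ A : FockT m n, ρ A A * ∑ k : Fin m,
        (if (k : ℕ) < l.1 + 1 then 1 else if (k : ℕ) = l.1 + 1 then -((l.1 + 1 : ℕ) : ℂ) else 0)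
          * (A.1 k : ℂ))
        = ∑ k : Fin m, ((r k : ℝ) : ℂ) * (ρ * JS n (Matrix.single k k 1)).trace := by
      simp only [ht, Finset.mul_sum, Finset.sum_comm (γ := FockT m n)]
      apply Finset.sum_congr rfl
      intro k _
      apply Finset.sum_congr rfl
      intro A _
      have hg : (if (k : ℕ) < l.1 + 1 then (1 : ℂ)
          else if (k : ℕ) = l.1 + 1 then -((l.1 + 1 : ℕ) : ℂ) else 0)
          = ((r k : ℝ) : ℂ) := by
        simp only [hrdef]; split_ifs <;> push_cast <;> ring
      rw [hg]; ring
    rw [swap, Complex.re_sum]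
    have hre : ∀ k : Fin m, (((r (k : ℕ) : ℝ) : ℂ) * (ρ * JS n (Matrix.single k k 1)).trace).re
        = r (k : ℕ) * f k := by
      intro k; rw [Complex.re_ofReal_mul]
    rw [Finset.sum_congr rfl (fun k _ => hre k)]
    have hFf : ∀ k : Fin m, r (k : ℕ) * f k = r (k : ℕ) * F (k : ℕ) := by
      intro k; rw [hFdef]; simp [k.2]
    rw [Finset.sum_congr rfl (fun k _ => hFf k),
      Fin.sum_univ_eq_sum_range (fun i => r i * F i) m]
    have hsplit : ∑ i ∈ Finset.range m, r i * F i
        = ∑ i ∈ Finset.range (l.1 + 2), r i * F i := by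
      symm
      apply Finset.sum_subset
      · exact Finset.range_subset_range.2 (by omega)
      · intro i _ hi
        simp only [Finset.mem_range, not_lt] at hi
        have hri : r i = 0 := by
          simp only [hrdef]; rw [if_neg (by omega), if_neg (by omega)]
        rw [hri, zero_mul]
    rw [hsplit, Finset.sum_range_succ]
    have h1 : r (l.1 + 1) = -((l.1 + 1 : ℕ) : ℝ) := by simp [hrdef]
    have h2 : ∀ i ∈ Finset.range (l.1 + 1), r i * F i = F i := by
      intro i hi
      simp only [Finset.mem_range] at hi
      simp only [hrdef]; rw [if_pos hi, one_mul]
    rw [Finset.sum_congr rfl h2, h1]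
    push_cast
    ring
  -- each normalized term picks up a factor 1/C
  have hoff : ∀ (X : Matrix (Fin m) (Fin m) ℂ),
      (((ρ * ((((Real.sqrt ((m + n).choose (m + 1)))⁻¹ : ℝ) : ℂ) • JS n X)).trace).re) ^ 2
      = (((m + n).choose (m + 1) : ℝ))⁻¹ * (((ρ * JS n X).trace).re) ^ 2 := by
    intro X
    rw [trace_smul_re', mul_pow, hc2]
  -- diagonal block of Itp
  have hdiagsum : (∑ l : Fin (m - 1),
      (((ρ * ((((Real.sqrt ((m + n).choose (m + 1)))⁻¹ : ℝ) : ℂ) •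
        JS n (diagGen l))).trace).re) ^ 2)
      = (((m + n).choose (m + 1) : ℝ))⁻¹ * ((∑ j : Fin m, f j ^ 2) - (n : ℝ) ^ 2 / m) := by
    have hterm : ∀ l : Fin (m - 1),
        (((ρ * ((((Real.sqrt ((m + n).choose (m + 1)))⁻¹ : ℝ) : ℂ) •
          JS n (diagGen l))).trace).re) ^ 2
        = (((m + n).choose (m + 1) : ℝ))⁻¹ *
          (((∑ j ∈ Finset.range (l.1 + 1), F j) - ((l.1 : ℝ) + 1) * F (l.1 + 1)) ^ 2 /
            (((l.1 : ℝ) + 1) * ((l.1 : ℝ) + 2))) := by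
      intro l
      rw [hoff, hdiag l, mul_pow]
      have hw : ((Real.sqrt (((l.1 : ℝ) + 1) * ((l.1 : ℝ) + 2)))⁻¹) ^ 2
          = (((l.1 : ℝ) + 1) * ((l.1 : ℝ) + 2))⁻¹ := by
        rw [inv_pow, Real.sq_sqrt (by positivity)]
      rw [hw]
      ring
    rw [Finset.sum_congr rfl (fun l _ => hterm l), ← Finset.mul_sum]
    congr 1
    rw [Fin.sum_univ_eq_sum_range (fun l => ((∑ j ∈ Finset.range (l + 1), F j)
      - ((l : ℝ) + 1) * F (l + 1)) ^ 2 / (((l : ℝ) + 1) * ((l : ℝ) + 2))) (m - 1)]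
    rw [gellmann_diag' F m hm]
    have e1 : ∑ j ∈ Finset.range m, F j = ∑ j : Fin m, f j := by
      rw [← Fin.sum_univ_eq_sum_range F m]
      exact Finset.sum_congr rfl (fun j _ => by simp [hFdef, j.2])
    have e2 : ∑ j ∈ Finset.range m, F j ^ 2 = ∑ j : Fin m, f j ^ 2 := by
      rw [← Fin.sum_univ_eq_sum_range (fun j => F j ^ 2) m]
      exact Finset.sum_congr rfl (fun j _ => by simp [hFdef, j.2])
    rw [e1, e2, hsum]
  -- Part 1
  have part1 : Itp m n ρ = (Io m n ρ - (n : ℝ) ^ 2 / m) / ((m + n).choose (m + 1)) := by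
    rw [Itp, Io, hdiagsum,
      Finset.sum_congr rfl (fun (p : {p : Fin m × Fin m // p.1 < p.2}) _ =>
        hoff (symGen p.1.1 p.1.2)),
      Finset.sum_congr rfl (fun (p : {p : Fin m × Fin m // p.1 < p.2}) _ =>
        hoff (asymGen p.1.1 p.1.2)),
      ← Finset.mul_sum, ← Finset.mul_sum]
    field_simp
    ring
  refine ⟨part1, ?_⟩
  rw [part1]
  -- arithmetic with binomial identities
  have hDpos : (0 : ℝ) < ((m + n).choose m : ℝ) := by
    have : 0 < (m + n).choose m := Nat.choose_pos (by omega)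
    exact_mod_cast this
  have hMpos : (0 : ℝ) < ((m + n - 1).choose n : ℝ) := by
    have : 0 < (m + n - 1).choose n := Nat.choose_pos (by omega)
    exact_mod_cast this
  have id1 : (((m + n).choose (m + 1) : ℝ)) * (m + 1) = (((m + n).choose m : ℝ)) * n := by
    have h := Nat.choose_succ_right_eq (m + n) m
    have hmn : m + n - m = n := by omega
    rw [hmn] at h
    exact_mod_cast h
  have id2 : (((m + n).choose m : ℝ)) * m = (((m + n - 1).choose n : ℝ)) * (m + n) := by
    have h1 := Nat.add_one_mul_choose_eq (m + n - 1) (m - 1)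
    have h2 : m + n - 1 + 1 = m + n := by omega
    have h3 : m - 1 + 1 = m := by omega
    rw [h2, h3] at h1
    have h4 : (m + n - 1).choose (m - 1) = (m + n - 1).choose n := by
      rw [← Nat.choose_symm (by omega : n ≤ m + n - 1)]
      congr 1; omega
    rw [h4] at h1
    exact_mod_cast h1.symm.trans (Nat.mul_comm _ _)
  have := final_arith (m : ℝ) (n : ℝ) ((m + n).choose (m + 1) : ℝ)
    ((m + n).choose m : ℝ) ((m + n - 1).choose n : ℝ) (Io m n ρ)
    (by exact_mod_cast hm) (by exact_mod_cast hn) hCpos hDpos hMpos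
    (by push_cast; exact_mod_cast id1) (by push_cast; exact_mod_cast id2)
  exact_mod_cast this
end

section
/- Suppose dφ: H(m) → H(M) is linear, satisfies dφ(S h S†) = φ(S) dφ(h) φ(S)† for a group homomorphism φ, and satisfies tr(dφ(h_i) dφ(h_j)) = c·δ_{ij} for an orthonormal basis {h_i} of H(m) and a constant c > 0. Define H_i = dφ(h_i)/√c. Then for all 0 ≤ i,j < m²: tr(H_i φ(S) H_j φ(S)†) = tr(h_i S h_j S†). In particular, the tangent block of the HTM of V = φ(S) equals the HTM of S. -/
open Matrix

/-- If a real-linear `dφ` is equivariant (`dφ(S h S†) = φ(S) dφ(h) φ(S)†`) for a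
homomorphism `φ` on unitaries and maps an orthonormal Hermitian basis `{h_i}` of
`H(m)` to matrices with `tr(dφ(h_i) dφ(h_j)) = c δ_{ij}`, then with
`H_i = dφ(h_i)/√c` one has `tr(H_i φ(S) H_j φ(S)†) = tr(h_i S h_j S†)`: the
tangent block of the HTM of `φ(S)` equals the HTM of `S`. -/
theorem stmt18 (m M : ℕ)
    (φ : Matrix (Fin m) (Fin m) ℂ → Matrix (Fin M) (Fin M) ℂ)
    (dφ : Matrix (Fin m) (Fin m) ℂ →ₗ[ℝ] Matrix (Fin M) (Fin M) ℂ)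
    (hequiv : ∀ S ∈ Matrix.unitaryGroup (Fin m) ℂ,
      ∀ A : Matrix (Fin m) (Fin m) ℂ, A.IsHermitian →
        dφ (S * A * Sᴴ) = φ S * dφ A * (φ S)ᴴ)
    (h : Fin (m ^ 2) → Matrix (Fin m) (Fin m) ℂ)
    (hherm : ∀ i, (h i).IsHermitian)
    (horth : ∀ i j, (h i * h j).trace = if i = j then 1 else 0)
    (hspan : ∀ A : Matrix (Fin m) (Fin m) ℂ, A.IsHermitian →
      A ∈ Submodule.span ℝ (Set.range h))
    (c : ℝ) (hc : 0 < c)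
    (hdorth : ∀ i j, (dφ (h i) * dφ (h j)).trace = if i = j then (c : ℂ) else 0) :
    ∀ S ∈ Matrix.unitaryGroup (Fin m) ℂ, ∀ i j,
      (((((Real.sqrt c)⁻¹ : ℝ) : ℂ) • dφ (h i)) * φ S *
          ((((Real.sqrt c)⁻¹ : ℝ) : ℂ) • dφ (h j)) * (φ S)ᴴ).trace =
        (h i * S * h j * Sᴴ).trace := by
  intro S hS i j
  have hconj : (S * h j * Sᴴ).IsHermitian := by
    unfold Matrix.IsHermitian
    rw [conjTranspose_mul, conjTranspose_mul, conjTranspose_conjTranspose,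
      (hherm j).eq, Matrix.mul_assoc]
  obtain ⟨a, ha⟩ := (Submodule.mem_span_range_iff_exists_fun ℝ).mp (hspan _ hconj)
  have hd : φ S * dφ (h j) * (φ S)ᴴ = ∑ k, a k • dφ (h k) := by
    rw [← hequiv S hS (h j) (hherm j), ← ha, map_sum]
    simp
  -- RHS
  have hrhs : (h i * S * h j * Sᴴ).trace = (a i : ℂ) := by
    have : h i * S * h j * Sᴴ = h i * (S * h j * Sᴴ) := by
      simp [Matrix.mul_assoc]
    rw [this, ← ha, Finset.mul_sum, trace_sum]
    have : ∀ k, (h i * a k • h k).trace = (a k : ℂ) * (if i = k then 1 else 0) := by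
      intro k
      rw [mul_smul_comm, trace_smul, horth i k]
      simp
    simp only [this]
    simp
  -- LHS
  have hlhs : (dφ (h i) * φ S * dφ (h j) * (φ S)ᴴ).trace = (a i : ℂ) * (c : ℂ) := by
    have : dφ (h i) * φ S * dφ (h j) * (φ S)ᴴ = dφ (h i) * (φ S * dφ (h j) * (φ S)ᴴ) := by
      simp [Matrix.mul_assoc]
    rw [this, hd, Finset.mul_sum, trace_sum]
    have : ∀ k, (dφ (h i) * a k • dφ (h k)).trace
        = (a k : ℂ) * (if i = k then (c : ℂ) else 0) := by
      intro k
      rw [mul_smul_comm, trace_smul, hdorth i k]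
      simp
    simp only [this]
    simp
  have hsq : (((Real.sqrt c)⁻¹ : ℝ) : ℂ) * (((Real.sqrt c)⁻¹ : ℝ) : ℂ) * (c : ℂ) = 1 := by
    have : ((Real.sqrt c)⁻¹ * (Real.sqrt c)⁻¹ * c : ℝ) = 1 := by
      rw [← Real.sqrt_mul_self hc.le]
      field_simp
      rw [Real.sq_sqrt (Real.sqrt_nonneg _)]
    rw [← Complex.ofReal_mul, ← Complex.ofReal_mul, this, Complex.ofReal_one]
  calc (((((Real.sqrt c)⁻¹ : ℝ) : ℂ) • dφ (h i)) * φ S *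
          ((((Real.sqrt c)⁻¹ : ℝ) : ℂ) • dφ (h j)) * (φ S)ᴴ).trace
      = (((Real.sqrt c)⁻¹ : ℝ) : ℂ) * (((Real.sqrt c)⁻¹ : ℝ) : ℂ) *
          (dφ (h i) * φ S * dφ (h j) * (φ S)ᴴ).trace := by
        simp only [Matrix.smul_mul, Matrix.mul_smul, trace_smul, smul_eq_mul]; ring
    _ = (a i : ℂ) := by rw [hlhs]; rw [show (((Real.sqrt c)⁻¹ : ℝ) : ℂ) * (((Real.sqrt c)⁻¹ : ℝ) : ℂ) * ((a i : ℂ) * (c : ℂ)) = (a i : ℂ) * ((((Real.sqrt c)⁻¹ : ℝ) : ℂ) * (((Real.sqrt c)⁻¹ : ℝ) : ℂ) * (c:ℂ)) by ring, hsq, mul_one]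
    _ = (h i * S * h j * Sᴴ).trace := hrhs.symm
end
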